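/- In the N-class model with N = 2, κ ∈ (1,2), and premiums c¹ = (θ₁, κθ₁), c² = (θ₂, κθ₂) where θ₁, θ₂ ∈ [μ, M/κ], the unique fixed point V* of the Bellman operator L_c satisfies: the quantity V*(n,i) − δ·cⁱ_n is equal to one and the same constant for all four states (n,i) ∈ {1,2} × {1,2} (i.e. V*(1,1) − δθ₁ = V*(2,1) − δκθ₁ = V*(1,2) − δθ₂ = V*(2,2) − δκθ₂). -/

import Mathlib

noncomputable section

open MeasureTheory Set

/-- Cumulative distribution function of the loss: point mass `p₀` at zero plus density `fL`. -/
def lossCdf (p₀ : ℝ) (fL : ℝ → ℝ) (x : ℝ) : ℝ := p₀ + ∫ ℓ in (0:ℝ)..x, fL ℓ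

/-- Rate class after a bonus: `n↓ = max(n−1,1)` (classes are 0-indexed by `Fin N`). -/
def rdown {N : ℕ} (n : Fin N) : Fin N :=
  ⟨n.val - 1, lt_of_le_of_lt (Nat.sub_le _ _) n.isLt⟩

/-- Rate class after a malus: `n↑ = min(n+1,N)` (classes are 0-indexed by `Fin N`). -/
def rup {N : ℕ} (n : Fin N) : Fin N :=
  if h : n.val + 1 < N then ⟨n.val + 1, h⟩ else n

/-- Company-switching probability `σ(n,i)`; company `0` is Company 1, company `1` is
Company 2, and `c i` is the premium schedule of company `i`. -/
def swProb {N : ℕ} (η : ℝ → ℝ) (c : Fin 2 → Fin N → ℝ) (n : Fin N) (i : Fin 2) : ℝ :=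
  if i = 0 then 1 - η (c 1 (rdown n) - c 0 (rdown n))
  else η (c 1 (rdown n) - c 0 (rdown n))

/-- Continuation value after a bonus: `W↓(n,i;v)`. (`i + 1` in `Fin 2` is the other company.) -/
def Wdown {N : ℕ} (η : ℝ → ℝ) (c : Fin 2 → Fin N → ℝ) (v : Fin N × Fin 2 → ℝ)
    (n : Fin N) (i : Fin 2) : ℝ :=
  (1 - swProb η c n i) * v (rdown n, i) + swProb η c n i * v (rdown n, i + 1)

/-- Continuation value after a malus: `W↑(n,i;v)`. -/
def Wup {N : ℕ} (η : ℝ → ℝ) (c : Fin 2 → Fin N → ℝ) (v : Fin N × Fin 2 → ℝ)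
    (n : Fin N) (i : Fin 2) : ℝ :=
  (1 - swProb η c n i) * v (rup n, i) + swProb η c n i * v (rup n, i + 1)

/-- One-step Bellman objective in the reporting barrier `b`. -/
def bellObj {N : ℕ} (p₀ δ : ℝ) (fL η : ℝ → ℝ) (c : Fin 2 → Fin N → ℝ)
    (v : Fin N × Fin 2 → ℝ) (x : Fin N × Fin 2) (b : ℝ) : ℝ :=
  δ * (c x.2 x.1 + (∫ ℓ in (0:ℝ)..b, ℓ * fL ℓ)
    + lossCdf p₀ fL b * Wdown η c v x.1 x.2
    + (1 - lossCdf p₀ fL b) * Wup η c v x.1 x.2)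

/-- The Bellman operator `L_c`. -/
def bellOp {N : ℕ} (p₀ δ : ℝ) (fL η : ℝ → ℝ) (c : Fin 2 → Fin N → ℝ)
    (v : Fin N × Fin 2 → ℝ) (x : Fin N × Fin 2) : ℝ :=
  ⨅ b : {b : ℝ // 0 ≤ b}, bellObj p₀ δ fL η c v x b.1

/-- The set of admissible premium pairs. -/
def premSet (N : ℕ) (μ M : ℝ) : Set (Fin 2 → Fin N → ℝ) :=
  {c | ∀ i : Fin 2, Monotone (c i) ∧ ∀ n : Fin N, c i n ∈ Set.Icc μ M}


/-- The 2-class premium schedules `c¹ = (θ₁, κθ₁)`, `c² = (θ₂, κθ₂)`: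
company `0` is Company 1 (base premium `θ₁`), class `0` is Class 1. -/
def prem2 (κ θ₁ θ₂ : ℝ) : Fin 2 → Fin 2 → ℝ := fun i n =>
  (if i = 0 then θ₁ else θ₂) * (if n = 0 then 1 else κ)

/-- in the 2-class case, the fixed point `V*` of the Bellman operator
satisfies that `V*(n,i) − δ·cⁱₙ` is one and the same constant over all four states. -/
theorem stmt_6 (p₀ δ μ M κ θ₁ θ₂ : ℝ) (fL η : ℝ → ℝ)
    (hp₀ : p₀ ∈ Set.Ioo (0:ℝ) 1) (hδ : δ ∈ Set.Ioo (0:ℝ) 1)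
    (hκ : κ ∈ Set.Ioo (1:ℝ) 2)
    (hfc : ContinuousOn fL (Set.Ioi 0)) (hfpos : ∀ ℓ : ℝ, 0 < ℓ → 0 < fL ℓ)
    (hfint : IntegrableOn fL (Set.Ioi 0))
    (hftot : ∫ ℓ in Set.Ioi (0:ℝ), fL ℓ = 1 - p₀)
    (hmint : IntegrableOn (fun ℓ => ℓ * fL ℓ) (Set.Ioi 0))
    (hμ : μ = ∫ ℓ in Set.Ioi (0:ℝ), ℓ * fL ℓ) (hμpos : 0 < μ) (hM : κ * μ ≤ M)
    (hηc : Continuous η) (hηm : Monotone η) (hη01 : ∀ t : ℝ, η t ∈ Set.Icc (0:ℝ) 1)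
    (hθ₁ : θ₁ ∈ Set.Icc μ (M / κ)) (hθ₂ : θ₂ ∈ Set.Icc μ (M / κ))
    (V : Fin 2 × Fin 2 → ℝ)
    (hV : bellOp p₀ δ fL η (prem2 κ θ₁ θ₂) V = V)
    (hVuniq : ∀ v : Fin 2 × Fin 2 → ℝ,
      bellOp p₀ δ fL η (prem2 κ θ₁ θ₂) v = v → v = V) :
    ∃ K : ℝ, ∀ x : Fin 2 × Fin 2, V x - δ * prem2 κ θ₁ θ₂ x.2 x.1 = K := by
  obtain ⟨hp0, hp1⟩ := hp₀
  obtain ⟨hδ0, hδ1⟩ := hδ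
  set c : Fin 2 → Fin 2 → ℝ := prem2 κ θ₁ θ₂ with hc
  set d : ℝ := θ₂ - θ₁ with hd
  set A : ℝ := η d * V (0, 0) + (1 - η d) * V (0, 1) with hA
  set B : ℝ := η d * V (1, 0) + (1 - η d) * V (1, 1) with hB
  have hrd : ∀ n : Fin 2, rdown n = 0 := by decide
  have hrp : ∀ n : Fin 2, rup n = (1 : Fin 2) := by decide
  have hcd0 : c 1 (0 : Fin 2) - c 0 (0 : Fin 2) = d := by
    simp [hc, prem2, hd]
  have h2 : (2 : Fin 2) = 0 := rfl
  have hp02 : ((0 : Fin 2), (2 : Fin 2)) = ((0 : Fin 2), (0 : Fin 2)) := by decide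
  have hp12 : ((1 : Fin 2), (2 : Fin 2)) = ((1 : Fin 2), (0 : Fin 2)) := by decide
  have hWd : ∀ x : Fin 2 × Fin 2, Wdown η c V x.1 x.2 = A := by
    rintro ⟨n, i⟩
    fin_cases i
    · simp only [Wdown, swProb, hrd n]
      rw [hcd0]
      norm_num [hA]
    · simp only [Wdown, swProb, hrd n]
      rw [hcd0]
      norm_num [hA]
      rw [show ((0 : Fin 2), (1 : Fin 2) + 1) = ((0 : Fin 2), (2 : Fin 2)) from rfl, hp02]
      norm_num
      ring
  have hWu : ∀ x : Fin 2 × Fin 2, Wup η c V x.1 x.2 = B := by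
    rintro ⟨n, i⟩
    fin_cases i
    · simp only [Wup, swProb, hrd n, hrp n]
      rw [hcd0]
      norm_num [hB]
    · simp only [Wup, swProb, hrd n, hrp n]
      rw [hcd0]
      norm_num [hB]
      rw [show ((1 : Fin 2), (1 : Fin 2) + 1) = ((1 : Fin 2), (2 : Fin 2)) from rfl, hp12]
      norm_num
      ring
  set G : {b : ℝ // 0 ≤ b} → ℝ := fun b =>
    δ * ((∫ ℓ in (0:ℝ)..b.1, ℓ * fL ℓ) + lossCdf p₀ fL b.1 * A
      + (1 - lossCdf p₀ fL b.1) * B) with hG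
  have hobj : ∀ (x : Fin 2 × Fin 2) (b : {b : ℝ // 0 ≤ b}),
      bellObj p₀ δ fL η c V x b.1 = δ * c x.2 x.1 + G b := by
    intro x b
    simp only [bellObj, hWd x, hWu x, hG]
    ring
  -- the loss cdf takes values in [0,1] for nonnegative barriers
  have hF : ∀ b : ℝ, 0 ≤ b → lossCdf p₀ fL b ∈ Set.Icc (0:ℝ) 1 := by
    intro b hb
    have hIoc : (∫ ℓ in (0:ℝ)..b, fL ℓ) = ∫ ℓ in Set.Ioc (0:ℝ) b, fL ℓ :=
      intervalIntegral.integral_of_le hb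
    have hnn : 0 ≤ ∫ ℓ in Set.Ioc (0:ℝ) b, fL ℓ :=
      setIntegral_nonneg measurableSet_Ioc fun ℓ hℓ => (hfpos ℓ hℓ.1).le
    have hle : (∫ ℓ in Set.Ioc (0:ℝ) b, fL ℓ) ≤ ∫ ℓ in Set.Ioi (0:ℝ), fL ℓ := by
      refine setIntegral_mono_set hfint ?_ (HasSubset.Subset.eventuallyLE Set.Ioc_subset_Ioi_self)
      exact (ae_restrict_iff' measurableSet_Ioi).2 (Filter.Eventually.of_forall
        fun ℓ hℓ => (hfpos ℓ hℓ).le)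
    constructor
    · simp only [lossCdf, hIoc]
      linarith
    · simp only [lossCdf, hIoc]
      rw [hftot] at hle
      linarith
  have hInn : ∀ b : ℝ, 0 ≤ b → 0 ≤ ∫ ℓ in (0:ℝ)..b, ℓ * fL ℓ := by
    intro b hb
    rw [intervalIntegral.integral_of_le hb]
    exact setIntegral_nonneg measurableSet_Ioc fun ℓ hℓ =>
      mul_nonneg hℓ.1.le (hfpos ℓ hℓ.1).le
  have hbdd : BddBelow (Set.range G) := by
    refine ⟨δ * min A B, ?_⟩
    rintro _ ⟨b, rfl⟩
    obtain ⟨hF0, hF1⟩ := hF b.1 b.2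
    have hI := hInn b.1 b.2
    have hmin : min A B ≤ lossCdf p₀ fL b.1 * A + (1 - lossCdf p₀ fL b.1) * B := by
      nlinarith [min_le_left A B, min_le_right A B]
    have : min A B ≤ (∫ ℓ in (0:ℝ)..b.1, ℓ * fL ℓ) + lossCdf p₀ fL b.1 * A
        + (1 - lossCdf p₀ fL b.1) * B := by linarith
    simpa [hG] using mul_le_mul_of_nonneg_left this hδ0.le
  haveI : Nonempty {b : ℝ // 0 ≤ b} := ⟨⟨0, le_refl 0⟩⟩
  refine ⟨⨅ b, G b, fun x => ?_⟩
  have hVx : V x = δ * c x.2 x.1 + ⨅ b, G b := by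
    have h1 : bellOp p₀ δ fL η c V x = V x := congrFun hV x
    rw [← h1]
    unfold bellOp
    have h2 : (⨅ b : {b : ℝ // 0 ≤ b}, bellObj p₀ δ fL η c V x b.1)
        = ⨅ b : {b : ℝ // 0 ≤ b}, (δ * c x.2 x.1 + G b) := by
      exact iInf_congr fun b => hobj x b
    rw [h2]
    have := (OrderIso.addLeft (δ * c x.2 x.1)).map_ciInf hbdd
    simpa using this.symm
  rw [hVx]
  ring

end
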